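/- arXiv:2101.09103 — 5 statements merged into one kernel-verified Lean document; each statement's English description precedes it below -/
import Mathlib

section
/- Define N : ℕ → ℝ by N(1) = 4, N(2) = 10, and N(k) = 3·N(k−1) − N(k−2) for k ≥ 3. Then N(k) = (2/√5)·(φ^(2k+1) + φ^(−(2k+1))) for all k ≥ 1, where φ = (1+√5)/2. -/
theorem stmt4 (φ : ℝ) (hφ : φ = (1 + Real.sqrt 5) / 2)
    (N : ℕ → ℝ) (h1 : N 1 = 4) (h2 : N 2 = 10)
    (hrec : ∀ k ≥ 3, N k = 3 * N (k - 1) - N (k - 2)) :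
    ∀ k ≥ 1, N k = 2 / Real.sqrt 5 *
      (φ ^ (2 * k + 1) + φ ^ (-(2 * (k : ℤ) + 1))) := by
  have hs : Real.sqrt 5 ^ 2 = 5 := Real.sq_sqrt (by norm_num)
  have hs0 : Real.sqrt 5 > 0 := Real.sqrt_pos.mpr (by norm_num)
  have hφpos : φ > 0 := by
    rw [hφ]; positivity
  have hφne : φ ≠ 0 := ne_of_gt hφpos
  have hroot : Real.sqrt 5 = 2 * φ - 1 := by rw [hφ]; ring
  have hsq : φ ^ 2 = φ + 1 := by
    rw [hφ]; field_simp; nlinarith [hs]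
  have hinv : φ⁻¹ = φ - 1 := by
    field_simp
    nlinarith [hsq]
  have hz : ∀ n : ℤ, φ ^ (n + 4) = 3 * φ ^ (n + 2) - φ ^ n := by
    intro n
    rw [zpow_add₀ hφne n 4, zpow_add₀ hφne n 2]
    have h2' : φ ^ (2 : ℤ) = φ ^ (2 : ℕ) := zpow_natCast φ 2
    have h4' : φ ^ (4 : ℤ) = φ ^ (4 : ℕ) := zpow_natCast φ 4
    rw [h2', h4']
    have h4 : φ ^ (4 : ℕ) = 3 * φ ^ (2 : ℕ) - 1 := by nlinarith [hsq]
    rw [h4]; ring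
  set F : ℕ → ℝ := fun k => 2 / Real.sqrt 5 *
      (φ ^ (2 * k + 1) + φ ^ (-(2 * (k : ℤ) + 1))) with hF
  have hzpow : ∀ k : ℕ, (φ : ℝ) ^ (2 * k + 1) = φ ^ (2 * (k : ℤ) + 1) := by
    intro k
    rw [← zpow_natCast φ (2 * k + 1)]
    push_cast
    ring_nf
  have base1 : F 1 = 4 := by
    simp only [hF]
    have e0 : (-(2 * ((1 : ℕ) : ℤ) + 1)) = -((3 : ℕ) : ℤ) := by norm_num
    rw [e0, zpow_neg, zpow_natCast, ← inv_pow, hinv]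
    norm_num
    rw [div_mul_eq_mul_div, div_eq_iff (ne_of_gt hs0)]
    linear_combination (-4) * hroot + (4 * φ - 2) * hsq
  have base2 : F 2 = 10 := by
    simp only [hF]
    have e0 : (-(2 * ((2 : ℕ) : ℤ) + 1)) = -((5 : ℕ) : ℤ) := by norm_num
    rw [e0, zpow_neg, zpow_natCast, ← inv_pow, hinv]
    norm_num
    rw [div_mul_eq_mul_div, div_eq_iff (ne_of_gt hs0)]
    have c3 : φ ^ 3 = 2 * φ + 1 := by nlinarith [hsq]
    have c5 : φ ^ 5 = 5 * φ + 3 := by nlinarith [hsq, c3]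
    have d5 : (φ - 1) ^ 5 = 5 * (φ - 1) - 3 := by nlinarith [hsq, c3, c5]
    rw [c5, d5, hroot]; ring
  have hFrec : ∀ k : ℕ, F (k + 3) = 3 * F (k + 2) - F (k + 1) := by
    intro k
    have e1 := hz (2 * (k : ℤ) + 3)
    have e2 := hz (-(2 * (k : ℤ) + 7))
    simp only [hF]
    rw [hzpow, hzpow, hzpow]
    push_cast
    have r1 : 2 * ((k : ℤ) + 3) + 1 = (2 * (k : ℤ) + 3) + 4 := by ring
    have r2 : 2 * ((k : ℤ) + 2) + 1 = (2 * (k : ℤ) + 3) + 2 := by ring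
    have r3 : 2 * ((k : ℤ) + 1) + 1 = 2 * (k : ℤ) + 3 := by ring
    rw [r1, r2, r3]
    have r4 : -(2 * (k : ℤ) + 3 + 4) = -(2 * (k : ℤ) + 7) := by ring
    have r5 : -(2 * (k : ℤ) + 3 + 2) = -(2 * (k : ℤ) + 7) + 2 := by ring
    have r6 : -(2 * (k : ℤ) + 3) = -(2 * (k : ℤ) + 7) + 4 := by ring
    rw [r4, r5, r6, e1, e2]
    ring
  have key : ∀ k : ℕ, N (k + 1) = F (k + 1) ∧ N (k + 2) = F (k + 2) := by
    intro k
    induction k with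
    | zero => exact ⟨by rw [h1, base1], by rw [h2, base2]⟩
    | succ n ih =>
      refine ⟨ih.2, ?_⟩
      have hr := hrec (n + 3) (by omega)
      simp only [show n + 3 - 1 = n + 2 from rfl, show n + 3 - 2 = n + 1 from rfl] at hr
      rw [hr, ih.1, ih.2, ← hFrec]
  intro k hk
  obtain ⟨m, rfl⟩ : ∃ m, k = m + 1 := ⟨k - 1, by omega⟩
  exact (key m).1
end

section
/- Let N(k) = (2/√5)·(φ^(2k+1) + φ^(−(2k+1))) and define N_circ(k) = 2·N(k−1) − N(k−2)/2 + 2. Then N_circ(k) = φ^(2k) + φ^(−2k) + 2 for all k ≥ 2, where φ = (1+√5)/2. -/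
theorem stmt6 (φ : ℝ) (hφ : φ = (1 + Real.sqrt 5) / 2)
    (N Ncirc : ℕ → ℝ)
    (hN : ∀ k : ℕ, N k = 2 / Real.sqrt 5 *
      (φ ^ (2 * k + 1) + φ ^ (-(2 * (k : ℤ) + 1))))
    (hC : ∀ k ≥ 2, Ncirc k = 2 * N (k - 1) - N (k - 2) / 2 + 2) :
    ∀ k ≥ 2, Ncirc k = φ ^ (2 * k) + φ ^ (-(2 * (k : ℤ))) + 2 := by
  intro k hk
  obtain ⟨m, rfl⟩ := Nat.exists_eq_add_of_le hk
  have h5 : Real.sqrt 5 ^ 2 = 5 := Real.sq_sqrt (by norm_num)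
  have h5pos : (0:ℝ) < Real.sqrt 5 := Real.sqrt_pos.mpr (by norm_num)
  have hφpos : 0 < φ := by rw [hφ]; positivity
  have hφ2 : φ ^ 2 = φ + 1 := by rw [hφ]; field_simp; nlinarith [h5]
  have hs : Real.sqrt 5 = 2 * φ - 1 := by rw [hφ]; ring
  have hinv : φ⁻¹ = φ - 1 := by
    field_simp
    nlinarith [hφ2]
  have key : ∀ n : ℕ, φ ^ (-(n:ℤ)) = (φ - 1) ^ n := by
    intro n
    rw [zpow_neg, zpow_natCast, ← inv_pow, hinv]
  have e1 : (2 + m) - 1 = m + 1 := by omega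
  have e2 : (2 + m) - 2 = m := by omega
  rw [hC _ (by omega), e1, e2, hN, hN]
  have k1 : φ ^ (-(2 * ((m+1 : ℕ) : ℤ) + 1)) = (φ - 1) ^ (2*m+3) := by
    have : (-(2 * ((m+1 : ℕ) : ℤ) + 1)) = -((2*m+3 : ℕ) : ℤ) := by push_cast; ring
    rw [this, key]
  have k2 : φ ^ (-(2 * ((m : ℕ) : ℤ) + 1)) = (φ - 1) ^ (2*m+1) := by
    have : (-(2 * ((m : ℕ) : ℤ) + 1)) = -((2*m+1 : ℕ) : ℤ) := by push_cast; ring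
    rw [this, key]
  have k3 : φ ^ (-(2 * ((2 + m : ℕ) : ℤ))) = (φ - 1) ^ (2*m+4) := by
    have : (-(2 * ((2 + m : ℕ) : ℤ))) = -((2*m+4 : ℕ) : ℤ) := by push_cast; ring
    rw [this, key]
  rw [k1, k2, k3, hs]
  have hne : 2 * φ - 1 ≠ 0 := by rw [← hs]; positivity
  have hA : 2 / (2*φ-1) * (2 * φ^3 - φ/2) = φ^4 := by
    field_simp
    linear_combination (-2*φ^2 - φ + 1) * hφ2
  have hB : 2 / (2*φ-1) * (2 * (φ-1)^3 - (φ-1)/2) = (φ-1)^4 := by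
    field_simp
    linear_combination (-2*φ^3 + 7*φ^2 - 7*φ + 2) * hφ2
  have expand1 : φ ^ (2*(m+1)+1) = φ^(2*m) * φ^3 := by ring
  have expand2 : φ ^ (2*m+1) = φ^(2*m) * φ := by ring
  have expand3 : φ ^ (2*(2+m)) = φ^(2*m) * φ^4 := by ring
  have expand4 : (φ-1) ^ (2*m+3) = (φ-1)^(2*m) * (φ-1)^3 := by ring
  have expand5 : (φ-1) ^ (2*m+1) = (φ-1)^(2*m) * (φ-1) := by ring
  have expand6 : (φ-1) ^ (2*m+4) = (φ-1)^(2*m) * (φ-1)^4 := by ring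
  rw [expand1, expand2, expand3, expand4, expand5, expand6, ← hA, ← hB]
  ring
end

section
/- Let N(k) = (2/√5)·(φ^(2k+2) − φ^(−(2k+2))) and define N_circ(k) = 3·N(k−2) − N(k−4)/2. Then N_circ(k) = φ^(2k) + φ^(−2k) for all k ≥ 4, where φ = (1+√5)/2. -/
theorem stmt7 (φ : ℝ) (hφ : φ = (1 + Real.sqrt 5) / 2)
    (N Ncirc : ℕ → ℝ)
    (hN : ∀ k : ℕ, N k = 2 / Real.sqrt 5 *
      (φ ^ (2 * k + 2) - φ ^ (-(2 * (k : ℤ) + 2))))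
    (hC : ∀ k ≥ 4, Ncirc k = 3 * N (k - 2) - N (k - 4) / 2) :
    ∀ k ≥ 4, Ncirc k = φ ^ (2 * k) + φ ^ (-(2 * (k : ℤ))) := by
  have hs0 : (0:ℝ) < Real.sqrt 5 := Real.sqrt_pos.mpr (by norm_num)
  have hs : Real.sqrt 5 ^ 2 = 5 := Real.sq_sqrt (by norm_num)
  have hφ0 : (0:ℝ) < φ := by rw [hφ]; positivity
  have ha1 : Real.sqrt 5 * φ ^ 6 = 6 * φ ^ 4 - 1 := by
    rw [hφ]
    linear_combination ((Real.sqrt 5 ^ 5 + 6 * Real.sqrt 5 ^ 4 + 20 * Real.sqrt 5 ^ 3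
      + 26 * Real.sqrt 5 ^ 2 + 19 * Real.sqrt 5 - 8) / 64) * hs
  have ha2 : φ ^ 6 - 6 * φ ^ 2 = Real.sqrt 5 := by
    rw [hφ]
    linear_combination ((Real.sqrt 5 ^ 4 + 6 * Real.sqrt 5 ^ 3 + 20 * Real.sqrt 5 ^ 2
      + 50 * Real.sqrt 5 + 19) / 64) * hs
  have key : ∀ n : ℕ, φ ^ (-(n:ℤ)) = (φ ^ n)⁻¹ := by
    intro n; rw [zpow_neg, zpow_natCast]
  intro k hk
  obtain ⟨m, rfl⟩ := Nat.exists_eq_add_of_le hk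
  rw [hC _ hk, hN, hN]
  have h2 : 4 + m - 2 = m + 2 := by omega
  have h4 : 4 + m - 4 = m := by omega
  rw [h2, h4]
  have e1 : (-(2 * ((m:ℤ) + 2) + 2)) = -((2*m+6 : ℕ) : ℤ) := by push_cast; ring
  have e2 : (-(2 * (m:ℤ) + 2)) = -((2*m+2 : ℕ) : ℤ) := by push_cast; ring
  have e3 : (-(2 * ((4:ℤ) + m))) = -((2*m+8 : ℕ) : ℤ) := by push_cast; ring
  push_cast
  rw [e1, e2, e3, key, key, key]
  have hx0 : φ ^ m ≠ 0 := by positivity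
  field_simp
  linear_combination (φ ^ 8 * φ ^ (m * 4)) * ha2 - (φ ^ 18 * φ ^ (m * 8)) * ha1
end

section
/- Consider words w : Fin k → Fin 4 over the alphabet {0,1,2,3} such that consecutive letters (w(i), w(i+1)) avoid the forbidden pairs (0,3), (1,2), (2,1), (2,2), (3,0), (3,3) (equivalently, allowed successors of 0 are {0,1,2}, of 1 are {0,1,3}, of 2 are {1,3}, of 3 are {0,2}). Let N(k) be the number of such words. Then N(k) = 3·N(k−1) − N(k−2) for all k ≥ 3. -/
/-- The adjacency rule on blocks: allowed successors of 0 are {0,1,2},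
of 1 are {0,1,3}, of 2 are {1,3}, of 3 are {0,2}; equivalently the pairs
(0,3), (1,2), (2,1), (2,2), (3,0), (3,3) are forbidden. -/
def allowedBlock (i j : Fin 4) : Prop :=
  (i, j) ∉ ({(0, 3), (1, 2), (2, 1), (2, 2), (3, 0), (3, 3)} :
    Set (Fin 4 × Fin 4))

/-- The number of words of length `k` over `{0,1,2,3}` all of whose pairs of
consecutive letters are allowed. -/
noncomputable def numChains (k : ℕ) : ℕ :=
  Nat.card {w : Fin k → Fin 4 //
    ∀ i : ℕ, ∀ h : i + 1 < k,
      allowedBlock (w ⟨i, by omega⟩) (w ⟨i + 1, h⟩)}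

instance (i j : Fin 4) : Decidable (allowedBlock i j) :=
  decidable_of_iff
    (¬((i, j) = (0, 3) ∨ (i, j) = (1, 2) ∨ (i, j) = (2, 1) ∨ (i, j) = (2, 2) ∨
        (i, j) = (3, 0) ∨ (i, j) = (3, 3)))
    (by simp [allowedBlock, Set.mem_insert_iff, Set.mem_singleton_iff])

/-- The chain condition. -/
def chainP (k : ℕ) (w : Fin k → Fin 4) : Prop :=
  ∀ i : ℕ, ∀ h : i + 1 < k, allowedBlock (w ⟨i, by omega⟩) (w ⟨i + 1, h⟩)

lemma numChains_def (k : ℕ) : numChains k = Nat.card {w : Fin k → Fin 4 // chainP k w} := rfl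

/-- Chains of length `k+1` ending at `j`. -/
noncomputable def V (k : ℕ) (j : Fin 4) : ℕ :=
  Nat.card {w : Fin (k + 1) → Fin 4 // chainP (k + 1) w ∧ w (Fin.last k) = j}

lemma natCard_sigma {ι : Type*} [Fintype ι] (α : ι → Type*) [∀ i, Finite (α i)] :
    Nat.card (Sigma α) = ∑ i, Nat.card (α i) := by
  haveI := fun i => Fintype.ofFinite (α i)
  simp [Nat.card_eq_fintype_card]

/-- Split by last letter. -/
def e1 (k : ℕ) : {w : Fin (k + 1) → Fin 4 // chainP (k + 1) w} ≃
    Σ j : Fin 4, {w : Fin (k + 1) → Fin 4 // chainP (k + 1) w ∧ w (Fin.last k) = j} where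
  toFun w := ⟨w.1 (Fin.last k), w.1, w.2, rfl⟩
  invFun s := ⟨s.2.1, s.2.2.1⟩
  left_inv w := rfl
  right_inv s := by
    obtain ⟨j, w, hw, hj⟩ := s
    subst hj
    rfl

lemma numChains_succ (k : ℕ) : numChains (k + 1) = ∑ j : Fin 4, V k j := by
  rw [numChains_def, Nat.card_congr (e1 k), natCard_sigma]
  rfl

lemma chainP_snoc {k : ℕ} (w : Fin (k + 1) → Fin 4) (j : Fin 4) :
    chainP (k + 2) (Fin.snoc w j) ↔ chainP (k + 1) w ∧ allowedBlock (w (Fin.last k)) j := by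
  constructor
  · intro h
    refine ⟨fun i hi => ?_, ?_⟩
    · have hh := h i (by omega)
      have e1 : (⟨i, by omega⟩ : Fin (k + 2)) = Fin.castSucc ⟨i, by omega⟩ := rfl
      have e2 : (⟨i + 1, by omega⟩ : Fin (k + 2)) = Fin.castSucc ⟨i + 1, hi⟩ := rfl
      rw [e1, e2, Fin.snoc_castSucc, Fin.snoc_castSucc] at hh
      exact hh
    · have hh := h k (by omega)
      have e1 : (⟨k, by omega⟩ : Fin (k + 2)) = Fin.castSucc (Fin.last k) := rfl
      have e2 : (⟨k + 1, by omega⟩ : Fin (k + 2)) = Fin.last (k + 1) := rfl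
      rw [e1, e2, Fin.snoc_castSucc, Fin.snoc_last] at hh
      exact hh
  · rintro ⟨h1, h2⟩ i hi
    by_cases hik : i + 1 < k + 1
    · have e1 : (⟨i, by omega⟩ : Fin (k + 2)) = Fin.castSucc ⟨i, by omega⟩ := rfl
      have e2 : (⟨i + 1, hi⟩ : Fin (k + 2)) = Fin.castSucc ⟨i + 1, hik⟩ := rfl
      rw [e1, e2, Fin.snoc_castSucc, Fin.snoc_castSucc]
      exact h1 i hik
    · have hik' : i = k := by omega
      subst hik'
      have e1 : (⟨i, by omega⟩ : Fin (i + 2)) = Fin.castSucc (Fin.last i) := rfl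
      have e2 : (⟨i + 1, hi⟩ : Fin (i + 2)) = Fin.last (i + 1) := rfl
      rw [e1, e2, Fin.snoc_castSucc, Fin.snoc_last]
      exact h2

lemma sigmaSubtypeExt {ι α : Type*} {P : ι → α → Prop} {s t : Σ i : ι, {a : α // P i a}}
    (h1 : s.1 = t.1) (h2 : s.2.1 = t.2.1) : s = t := by
  obtain ⟨i, a, ha⟩ := s
  obtain ⟨j, b, hb⟩ := t
  simp only at h1 h2
  subst h1
  subst h2
  rfl

/-- Peel off the last letter. -/
def e2 (k : ℕ) (j : Fin 4) :
    {w : Fin (k + 2) → Fin 4 // chainP (k + 2) w ∧ w (Fin.last (k + 1)) = j} ≃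
    Σ i : Fin 4, {w : Fin (k + 1) → Fin 4 //
      (chainP (k + 1) w ∧ w (Fin.last k) = i) ∧ allowedBlock i j} where
  toFun w := by
    refine ⟨Fin.init w.1 (Fin.last k), Fin.init w.1, ⟨?_, rfl⟩, ?_⟩
    · have hc : chainP (k + 2) (Fin.snoc (Fin.init w.1) (w.1 (Fin.last (k + 1)))) := by
        rw [Fin.snoc_init_self]; exact w.2.1
      exact ((chainP_snoc _ _).1 hc).1
    · have hc : chainP (k + 2) (Fin.snoc (Fin.init w.1) (w.1 (Fin.last (k + 1)))) := by
        rw [Fin.snoc_init_self]; exact w.2.1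
      have := ((chainP_snoc _ _).1 hc).2
      rwa [w.2.2] at this
  invFun s :=
    ⟨Fin.snoc s.2.1 j,
      (chainP_snoc _ _).2 ⟨s.2.2.1.1, by rw [s.2.2.1.2]; exact s.2.2.2⟩,
      Fin.snoc_last _ _⟩
  left_inv w := by
    apply Subtype.ext
    have h := w.2.2
    conv_rhs => rw [← Fin.snoc_init_self w.1]
    rw [h]
  right_inv s := by
    obtain ⟨i, w, ⟨hc, hl⟩, ha⟩ := s
    have h1 := @Fin.init_snoc (k + 1) (fun _ => Fin 4) j w
    subst hl
    exact sigmaSubtypeExt (congrFun h1 (Fin.last k)) h1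

lemma V_succ (k : ℕ) (j : Fin 4) :
    V (k + 1) j = ∑ i : Fin 4, if allowedBlock i j then V k i else 0 := by
  rw [V, Nat.card_congr (e2 k j), natCard_sigma]
  refine Finset.sum_congr rfl fun i _ => ?_
  by_cases h : allowedBlock i j
  · rw [if_pos h, V]
    exact Nat.card_congr (Equiv.subtypeEquivRight fun w => by tauto)
  · rw [if_neg h]
    haveI : IsEmpty {w : Fin (k + 1) → Fin 4 //
        (chainP (k + 1) w ∧ w (Fin.last k) = i) ∧ allowedBlock i j} :=
      ⟨fun w => h w.2.2⟩
    exact Nat.card_of_isEmpty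

lemma V_zero (j : Fin 4) : V 0 j = 1 := by
  haveI : Unique {w : Fin 1 → Fin 4 // chainP 1 w ∧ w (Fin.last 0) = j} :=
    { default := ⟨fun _ => j, fun i h => by omega, rfl⟩
      uniq := fun w => Subtype.ext (funext fun i => by
        have hi : i = Fin.last 0 := Subsingleton.elim _ _
        rw [hi, w.2.2]) }
  exact Nat.card_unique

/-- The two counts (ending in {0,1} vs {2,3}). -/
def ab : ℕ → ℕ × ℕ
  | 0 => (1, 1)
  | n + 1 => (2 * (ab n).1 + (ab n).2, (ab n).1 + (ab n).2)

lemma V_eq (k : ℕ) : V k 0 = (ab k).1 ∧ V k 1 = (ab k).1 ∧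
    V k 2 = (ab k).2 ∧ V k 3 = (ab k).2 := by
  induction k with
  | zero => simp [V_zero, ab]
  | succ n ih =>
    obtain ⟨h0, h1, h2, h3⟩ := ih
    refine ⟨?_, ?_, ?_, ?_⟩ <;>
    · rw [V_succ, Fin.sum_univ_four]
      simp only [h0, h1, h2, h3, ab]
      norm_num [show allowedBlock 0 0 from by decide, show allowedBlock 1 0 from by decide,
        show allowedBlock 2 0 from by decide, show ¬allowedBlock 3 0 from by decide,
        show allowedBlock 0 1 from by decide, show allowedBlock 1 1 from by decide,
        show ¬allowedBlock 2 1 from by decide, show allowedBlock 3 1 from by decide,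
        show allowedBlock 0 2 from by decide, show ¬allowedBlock 1 2 from by decide,
        show ¬allowedBlock 2 2 from by decide, show allowedBlock 3 2 from by decide,
        show ¬allowedBlock 0 3 from by decide, show allowedBlock 1 3 from by decide,
        show allowedBlock 2 3 from by decide, show ¬allowedBlock 3 3 from by decide]
      try ring

lemma numChains_formula (k : ℕ) : numChains (k + 1) = 2 * ((ab k).1 + (ab k).2) := by
  obtain ⟨h0, h1, h2, h3⟩ := V_eq k
  rw [numChains_succ, Fin.sum_univ_four, h0, h1, h2, h3]
  ring

theorem stmt13 :
    ∀ k ≥ 3, (numChains k : ℤ) = 3 * numChains (k - 1) - numChains (k - 2) := by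
  intro k hk
  obtain ⟨m, rfl⟩ : ∃ m, k = m + 3 := ⟨k - 3, by omega⟩
  have e1 : m + 3 - 1 = (m + 1) + 1 := by omega
  have e2 : m + 3 - 2 = m + 1 := by omega
  have e3 : m + 3 = (m + 2) + 1 := by omega
  rw [e1, e2, e3, numChains_formula, numChains_formula, numChains_formula]
  simp only [ab]
  push_cast
  ring
end

section
/- Let M be the 4×4 zero-one matrix with M i j = 1 iff j is an allowed successor of i under the rules 0 → {0,1,2}, 1 → {0,1,3}, 2 → {1,3}, 3 → {0,2}. Then the trace of M^k equals φ^(2k) + φ^(−2k) + ε(k), where ε(k) is the contribution of the remaining eigenvalues; more concretely, trace(M^k) satisfies the linear recurrence determined by the characteristic polynomial of M, and the dominant growth rate of trace(M^k) is φ² = (3+√5)/2. -/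
/-- The transfer matrix of the block adjacency rules: `M i j = 1` iff `j` is an
allowed successor of `i` under 0 → {0,1,2}, 1 → {0,1,3}, 2 → {1,3}, 3 → {0,2}. -/
noncomputable def transferM : Matrix (Fin 4) (Fin 4) ℝ :=
  !![1, 1, 1, 0;
     1, 1, 0, 1;
     0, 1, 0, 1;
     1, 0, 1, 0]

open Polynomial Matrix Filter Real

namespace Stmt15Aux

noncomputable def A : ℝ := (3 + Real.sqrt 5) / 2
noncomputable def B : ℝ := (3 - Real.sqrt 5) / 2
noncomputable def e (k : ℕ) : ℝ := if k % 3 = 0 then 2 else -1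
noncomputable def f (k : ℕ) : ℝ := A ^ k + B ^ k + e k

lemma hs : Real.sqrt 5 ^ 2 = 5 := Real.sq_sqrt (by norm_num)
lemma hs0 : 0 ≤ Real.sqrt 5 := Real.sqrt_nonneg 5
lemma hs1 : 1 ≤ Real.sqrt 5 := by nlinarith [hs, hs0]
lemma hs3 : Real.sqrt 5 ≤ 3 := by nlinarith [hs, hs0]

lemma hA2 : A ^ 2 = 3 * A - 1 := by unfold A; linear_combination (1/4 : ℝ) * hs
lemma hB2 : B ^ 2 = 3 * B - 1 := by unfold B; linear_combination (1/4 : ℝ) * hs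
lemma hA4 : A ^ 4 = 2 * A ^ 3 + A ^ 2 + 2 * A - 1 := by
  linear_combination (A ^ 2 + A + 1) * hA2
lemma hB4 : B ^ 4 = 2 * B ^ 3 + B ^ 2 + 2 * B - 1 := by
  linear_combination (B ^ 2 + B + 1) * hB2

lemma hA0 : (2:ℝ) ≤ A := by unfold A; nlinarith [hs1]
lemma hA1 : (1:ℝ) ≤ A := le_trans (by norm_num) hA0
lemma hB0 : 0 ≤ B := by unfold B; nlinarith [hs3]
lemma hB1 : B ≤ 1 := by unfold B; nlinarith [hs1]

lemma herec (k : ℕ) : e (k+4) = 2 * e (k+3) + e (k+2) + 2 * e (k+1) - e k := by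
  have h3 : k % 3 = 0 ∨ k % 3 = 1 ∨ k % 3 = 2 := by omega
  rcases h3 with h | h | h <;>
    simp only [e, show (k+4) % 3 = (k % 3 + 1) % 3 by omega,
      show (k+3) % 3 = k % 3 by omega, show (k+2) % 3 = (k % 3 + 2) % 3 by omega,
      show (k+1) % 3 = (k % 3 + 1) % 3 by omega, h] <;> norm_num

lemma hfrec (k : ℕ) : f (k+4) = 2 * f (k+3) + f (k+2) + 2 * f (k+1) - f k := by
  simp only [f]
  have hA : A ^ (k+4) = 2 * A ^ (k+3) + A ^ (k+2) + 2 * A ^ (k+1) - A ^ k := by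
    have : A ^ (k+4) = A ^ k * A ^ 4 := by rw [← pow_add]
    rw [this, hA4]; ring
  have hB : B ^ (k+4) = 2 * B ^ (k+3) + B ^ (k+2) + 2 * B ^ (k+1) - B ^ k := by
    have : B ^ (k+4) = B ^ k * B ^ 4 := by rw [← pow_add]
    rw [this, hB4]; ring
  rw [hA, hB, herec k]; ring

lemma hf0 : f 0 = 4 := by simp [f, e]; norm_num
lemma hf1 : f 1 = 2 := by simp [f, e, A, B]; ring_nf
lemma hf2 : f 2 = 6 := by
  simp only [f, e, A, B]; norm_num
  nlinarith [hs]
lemma hf3 : f 3 = 20 := by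
  simp only [f, e, A, B]; norm_num
  nlinarith [hs]

end Stmt15Aux

namespace Stmt15Aux

lemma hcm : charmatrix transferM =
    !![X-1, -1, -1, 0; -1, X-1, 0, -1; 0, -1, X, -1; -1, 0, -1, X] := by
  ext i j
  fin_cases i <;> fin_cases j <;>
    simp [charmatrix_apply, transferM, Matrix.one_apply, Matrix.diagonal_apply]

lemma hcp : transferM.charpoly = X^4 - 2*X^3 - X^2 - 2*X + 1 := by
  rw [Matrix.charpoly, hcm]
  rw [show (!![X-1, -1, -1, 0; -1, X-1, 0, -1; 0, -1, X, -1; -1, 0, -1, X] :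
      Matrix (Fin 4) (Fin 4) ℝ[X]).det = _ from Matrix.det_succ_row_zero _]
  simp [Fin.sum_univ_succ, Matrix.det_fin_three, Fin.succAbove]
  ring

lemma hM4 : transferM ^ 4 = (2:ℝ) • transferM ^ 3 + transferM ^ 2 + (2:ℝ) • transferM ^ 1 - 1 := by
  have h := transferM.aeval_self_charpoly
  rw [hcp] at h
  simp only [map_add, map_sub, _root_.map_mul, aeval_X_pow, aeval_X, map_ofNat,
    _root_.map_one] at h
  rw [← sub_eq_zero, ← h]
  rw [pow_one]
  have h2 : ∀ A : Matrix (Fin 4) (Fin 4) ℝ, (2:ℝ) • A = 2 * A := by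
    intro A; rw [two_smul, two_mul]
  rw [h2, h2]
  noncomm_ring

lemma hrec (k : ℕ) : transferM ^ (k+4) =
    (2:ℝ) • transferM ^ (k+3) + transferM ^ (k+2) + (2:ℝ) • transferM ^ (k+1) - transferM ^ k := by
  have : transferM ^ (k+4) = transferM ^ k * transferM ^ 4 := by rw [← pow_add]
  rw [this, hM4]
  simp only [mul_add, mul_sub, mul_smul_comm, mul_one, ← pow_add]

lemma htrrec (k : ℕ) : Matrix.trace (transferM ^ (k+4)) =
    2 * Matrix.trace (transferM ^ (k+3)) + Matrix.trace (transferM ^ (k+2)) +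
    2 * Matrix.trace (transferM ^ (k+1)) - Matrix.trace (transferM ^ k) := by
  rw [hrec k]
  simp [Matrix.trace_add, Matrix.trace_sub, Matrix.trace_smul, smul_eq_mul]

lemma htr0 : Matrix.trace (transferM ^ 0) = 4 := by
  simp [Matrix.trace, Fin.sum_univ_four]
lemma htr1 : Matrix.trace (transferM ^ 1) = 2 := by
  simp [Matrix.trace, Fin.sum_univ_four, transferM, Matrix.diag, Matrix.vecHead, Matrix.vecTail]
  norm_num
lemma htr2 : Matrix.trace (transferM ^ 2) = 6 := by
  rw [pow_two]
  simp [Matrix.trace, Fin.sum_univ_four, transferM, Matrix.diag, Matrix.mul_apply,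
    Matrix.vecHead, Matrix.vecTail]
  norm_num
lemma htr3 : Matrix.trace (transferM ^ 3) = 20 := by
  rw [pow_succ, pow_two]
  simp [Matrix.trace, Fin.sum_univ_four, transferM, Matrix.diag, Matrix.mul_apply,
    Matrix.vecHead, Matrix.vecTail]
  norm_num

lemma htr (k : ℕ) : Matrix.trace (transferM ^ k) = f k := by
  have key : ∀ n, Matrix.trace (transferM ^ n) = f n ∧
      Matrix.trace (transferM ^ (n+1)) = f (n+1) ∧
      Matrix.trace (transferM ^ (n+2)) = f (n+2) ∧
      Matrix.trace (transferM ^ (n+3)) = f (n+3) := by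
    intro n
    induction n with
    | zero => exact ⟨by rw [htr0, hf0], by rw [htr1, hf1], by rw [htr2, hf2], by rw [htr3, hf3]⟩
    | succ m ih =>
      refine ⟨ih.2.1, ih.2.2.1, ih.2.2.2, ?_⟩
      have : m + 1 + 3 = m + 4 := by ring
      rw [this, htrrec m, hfrec m, ih.1, ih.2.1, ih.2.2.1, ih.2.2.2]
  exact (key k).1

end Stmt15Aux

namespace Stmt15Aux

lemma he_lb (k : ℕ) : -1 ≤ e k := by unfold e; split <;> norm_num
lemma he_ub (k : ℕ) : e k ≤ 2 := by unfold e; split <;> norm_num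

lemma hf_lb {k : ℕ} (hk : 1 ≤ k) : A ^ k / 2 ≤ f k := by
  have h1 : (2:ℝ) ≤ A ^ k := le_trans hA0 (le_self_pow₀ hA1 (by omega))
  have h2 : (0:ℝ) ≤ B ^ k := pow_nonneg hB0 k
  have := he_lb k
  unfold f; linarith

lemma hf_ub (k : ℕ) : f k ≤ 4 * A ^ k := by
  have h1 : (1:ℝ) ≤ A ^ k := one_le_pow₀ hA1
  have h2 : B ^ k ≤ 1 := pow_le_one₀ hB0 hB1
  have := he_ub k
  unfold f; linarith

lemma tendsto_rpow_inv_one {c : ℝ} (hc : 0 < c) :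
    Tendsto (fun k : ℕ => c ^ ((k:ℝ))⁻¹) atTop (nhds 1) := by
  have hinv : Tendsto (fun k : ℕ => ((k:ℝ))⁻¹) atTop (nhds 0) :=
    tendsto_inv_atTop_zero.comp tendsto_natCast_atTop_atTop
  have heq : (fun k : ℕ => c ^ ((k:ℝ))⁻¹) = fun k : ℕ => Real.exp (Real.log c * ((k:ℝ))⁻¹) :=
    funext fun k => Real.rpow_def_of_pos hc _
  rw [heq]
  have hmul : Tendsto (fun k : ℕ => Real.log c * ((k:ℝ))⁻¹) atTop (nhds 0) := by
    simpa using hinv.const_mul (Real.log c)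
  have hexp := (Real.continuous_exp.tendsto 0).comp hmul
  simpa [Function.comp_def] using hexp

lemma rpow_key {c : ℝ} (hc : 0 ≤ c) {k : ℕ} (hk : 1 ≤ k) :
    (c * A ^ k) ^ ((k:ℝ))⁻¹ = c ^ ((k:ℝ))⁻¹ * A := by
  have hA : (0:ℝ) ≤ A := le_trans (by norm_num) hA0
  rw [Real.mul_rpow hc (pow_nonneg hA k)]
  congr 1
  rw [← Real.rpow_natCast A k, ← Real.rpow_mul hA,
    mul_inv_cancel₀ (show (k:ℝ) ≠ 0 by exact_mod_cast (by omega : k ≠ 0)), Real.rpow_one]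

end Stmt15Aux

theorem stmt15 (φ : ℝ) (hφ : φ = (1 + Real.sqrt 5) / 2) :
    (∀ k : ℕ, Matrix.trace (transferM ^ (k + 4)) =
      -∑ i ∈ Finset.range 4,
        (Matrix.charpoly transferM).coeff i * Matrix.trace (transferM ^ (k + i))) ∧
    Filter.Tendsto
      (fun k : ℕ => (Matrix.trace (transferM ^ k)) ^ ((k : ℝ)⁻¹))
      Filter.atTop (nhds (φ ^ 2)) := by
  constructor
  · intro k
    have hc0 : (transferM.charpoly).coeff 0 = 1 := by
      norm_num [Stmt15Aux.hcp, coeff_sub, coeff_add, coeff_X_pow, coeff_one, coeff_X]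
    have hc1 : (transferM.charpoly).coeff 1 = -2 := by
      norm_num [Stmt15Aux.hcp, coeff_sub, coeff_add, coeff_X_pow, coeff_one, coeff_X]
    have hc2 : (transferM.charpoly).coeff 2 = -1 := by
      norm_num [Stmt15Aux.hcp, coeff_sub, coeff_add, coeff_X_pow, coeff_one, coeff_X]
    have hc3 : (transferM.charpoly).coeff 3 = -2 := by
      norm_num [Stmt15Aux.hcp, coeff_sub, coeff_add, coeff_X_pow, coeff_one, coeff_X]
    rw [Finset.sum_range_succ, Finset.sum_range_succ, Finset.sum_range_succ,
      Finset.sum_range_one, hc0, hc1, hc2, hc3]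
    simp only [Nat.add_zero]
    have h := Stmt15Aux.htrrec k
    linarith
  · have hAeq : φ ^ 2 = Stmt15Aux.A := by
      rw [hφ]; unfold Stmt15Aux.A; linear_combination (1/4 : ℝ) * Stmt15Aux.hs
    rw [hAeq]
    have hApos : (0:ℝ) ≤ Stmt15Aux.A := le_trans (by norm_num) Stmt15Aux.hA0
    have hg := (Stmt15Aux.tendsto_rpow_inv_one (show (0:ℝ) < 2⁻¹ by norm_num)).mul_const
      Stmt15Aux.A
    have hh := (Stmt15Aux.tendsto_rpow_inv_one (show (0:ℝ) < 4 by norm_num)).mul_const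
      Stmt15Aux.A
    rw [one_mul] at hg hh
    refine tendsto_of_tendsto_of_tendsto_of_le_of_le' hg hh ?_ ?_
    · filter_upwards [eventually_ge_atTop 1] with k hk
      rw [← Stmt15Aux.rpow_key (show (0:ℝ) ≤ 2⁻¹ by norm_num) hk, Stmt15Aux.htr]
      refine Real.rpow_le_rpow (mul_nonneg (by norm_num) (pow_nonneg hApos k)) ?_
        (inv_nonneg.mpr (Nat.cast_nonneg k))
      have := Stmt15Aux.hf_lb hk
      linarith
    · filter_upwards [eventually_ge_atTop 1] with k hk
      rw [← Stmt15Aux.rpow_key (show (0:ℝ) ≤ 4 by norm_num) hk, Stmt15Aux.htr]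
      refine Real.rpow_le_rpow ?_ ?_ (inv_nonneg.mpr (Nat.cast_nonneg k))
      · have h1 : (2:ℝ) ≤ Stmt15Aux.A ^ k :=
          le_trans Stmt15Aux.hA0 (le_self_pow₀ Stmt15Aux.hA1 (by omega))
        have := Stmt15Aux.hf_lb hk
        linarith
      · exact Stmt15Aux.hf_ub k
end
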